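/- arXiv:1810.02752 — 4 statements merged into one kernel-verified Lean document; each statement's English description precedes it below -/
import Mathlib

section
/- Let n > α > 0 and let u : ℝⁿ \ {0} → ℝ be a positive function satisfying u(x) ≥ (λ/|x|)^{n-α} u(λ²x/|x|²) for all λ > 0 and all x with |x| ≥ λ. Then for all |x| ≥ 1, u(x) ≥ C₀ |x|^{-(n-α)/2}, where C₀ = inf_{|z|=1} u(z) (assumed positive, e.g. u continuous and positive on the unit sphere). -/
theorem stmt_5 (n : ℕ) (α : ℝ) (hα : 0 < α) (hαn : α < n)
    (u : EuclideanSpace ℝ (Fin n) → ℝ)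
    (hpos : ∀ x : EuclideanSpace ℝ (Fin n), x ≠ 0 → 0 < u x)
    (hscal : ∀ lam : ℝ, 0 < lam → ∀ x : EuclideanSpace ℝ (Fin n), lam ≤ ‖x‖ →
      (lam / ‖x‖) ^ ((n : ℝ) - α) * u ((lam ^ 2 / ‖x‖ ^ 2) • x) ≤ u x)
    (C₀ : ℝ) (hC₀ : 0 < C₀)
    (hC₀le : ∀ z : EuclideanSpace ℝ (Fin n), ‖z‖ = 1 → C₀ ≤ u z) :
    ∀ x : EuclideanSpace ℝ (Fin n), 1 ≤ ‖x‖ →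
      C₀ * ‖x‖ ^ (-((n : ℝ) - α) / 2) ≤ u x := by
  intro x hx
  have hxpos : (0:ℝ) < ‖x‖ := lt_of_lt_of_le one_pos hx
  set r := ‖x‖ with hr
  have hlam : (0:ℝ) < Real.sqrt r := Real.sqrt_pos.mpr hxpos
  have hlamr : Real.sqrt r ≤ r := by
    nlinarith [Real.sq_sqrt hxpos.le, Real.sqrt_nonneg r]
  have key := hscal (Real.sqrt r) hlam x hlamr
  have hsq : Real.sqrt r ^ 2 = r := Real.sq_sqrt hxpos.le
  have hnorm : ‖(Real.sqrt r ^ 2 / r ^ 2) • x‖ = 1 := by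
    rw [norm_smul, hsq, Real.norm_eq_abs,
      abs_of_pos (by positivity : (0:ℝ) < r / r ^ 2), ← hr]
    field_simp
  have hu1 : C₀ ≤ u ((Real.sqrt r ^ 2 / r ^ 2) • x) := hC₀le _ hnorm
  have hexp : (Real.sqrt r / r) ^ ((n : ℝ) - α) = r ^ (-((n : ℝ) - α) / 2) := by
    have h2 := Real.rpow_sub hxpos (1/2) 1
    rw [Real.rpow_one] at h2
    have h1 : Real.sqrt r / r = r ^ (-(1:ℝ)/2) := by
      rw [Real.sqrt_eq_rpow, show (-(1:ℝ)/2) = 1/2 - 1 by norm_num]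
      exact h2.symm
    rw [h1, ← Real.rpow_mul hxpos.le]
    ring_nf
  calc C₀ * r ^ (-((n : ℝ) - α) / 2)
      ≤ u ((Real.sqrt r ^ 2 / r ^ 2) • x) * r ^ (-((n : ℝ) - α) / 2) := by
        apply mul_le_mul_of_nonneg_right hu1 (by positivity)
    _ = (Real.sqrt r / r) ^ ((n : ℝ) - α) * u ((Real.sqrt r ^ 2 / r ^ 2) • x) := by
        rw [hexp]; ring
    _ ≤ u x := key
end

section
/- Let n > α > 0 and let u be a positive continuous function on the punctured closed unit ball of ℝⁿ satisfying u(x) ≥ (λ/|x|)^{n-α} u(λ²x/|x|²) for all 0 < λ < 1 and all x with λ² ≤ |x| ≤ λ. Then u(x) ≥ C₀ (2|x|)^{-(n-α)/2} for all 0 < |x| ≤ 1/2, where C₀ = min_{|z|=1/2} u(z) > 0. -/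
theorem stmt_6 (n : ℕ) (α : ℝ) (hα : 0 < α) (hαn : α < n)
    (u : EuclideanSpace ℝ (Fin n) → ℝ)
    (hcont : ContinuousOn u {x : EuclideanSpace ℝ (Fin n) | 0 < ‖x‖ ∧ ‖x‖ ≤ 1})
    (hpos : ∀ x : EuclideanSpace ℝ (Fin n), 0 < ‖x‖ → ‖x‖ ≤ 1 → 0 < u x)
    (hscal : ∀ lam : ℝ, 0 < lam → lam < 1 →
      ∀ x : EuclideanSpace ℝ (Fin n), lam ^ 2 ≤ ‖x‖ → ‖x‖ ≤ lam →
        (lam / ‖x‖) ^ ((n : ℝ) - α) * u ((lam ^ 2 / ‖x‖ ^ 2) • x) ≤ u x)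
    (C₀ : ℝ) (hC₀ : 0 < C₀)
    (hC₀le : ∀ z : EuclideanSpace ℝ (Fin n), ‖z‖ = 1 / 2 → C₀ ≤ u z) :
    ∀ x : EuclideanSpace ℝ (Fin n), 0 < ‖x‖ → ‖x‖ ≤ 1 / 2 →
      C₀ * (2 * ‖x‖) ^ (-((n : ℝ) - α) / 2) ≤ u x := by
  intro x hx hx2
  set r := ‖x‖ with hr
  set lam := Real.sqrt (r / 2) with hlam
  have hr2 : 0 < r / 2 := by linarith
  have hlam_pos : 0 < lam := Real.sqrt_pos.mpr hr2
  have hlamsq : lam ^ 2 = r / 2 := Real.sq_sqrt hr2.le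
  have hlam_lt : lam < 1 := by
    have : lam ^ 2 < 1 := by rw [hlamsq]; linarith
    nlinarith
  have h1 : lam ^ 2 ≤ r := by rw [hlamsq]; linarith
  have h2 : r ≤ lam := by
    have : r ^ 2 ≤ lam ^ 2 := by rw [hlamsq]; nlinarith
    nlinarith
  have key := hscal lam hlam_pos hlam_lt x h1 h2
  have hynorm : ‖(lam ^ 2 / ‖x‖ ^ 2) • x‖ = 1 / 2 := by
    rw [norm_smul, Real.norm_eq_abs, abs_of_pos (by positivity)]
    rw [← hr, hlamsq]
    field_simp
  have hCy := hC₀le _ hynorm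
  have hmul : Real.sqrt (r / 2) * Real.sqrt (2 * r) = r := by
    rw [← Real.sqrt_mul (by linarith), show r / 2 * (2 * r) = r ^ 2 by ring,
      Real.sqrt_sq hx.le]
  have hsq2r : 0 < Real.sqrt (2 * r) := Real.sqrt_pos.mpr (by linarith)
  have hbase : lam / r = (2 * r) ^ (-(1/2 : ℝ)) := by
    rw [Real.rpow_neg (by linarith), ← Real.sqrt_eq_rpow]
    rw [div_eq_iff hx.ne', inv_mul_eq_div, eq_div_iff hsq2r.ne']
    exact hmul
  have hpow : (lam / r) ^ ((n : ℝ) - α) = (2 * r) ^ (-((n : ℝ) - α) / 2) := by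
    rw [hbase, ← Real.rpow_mul (by linarith)]
    congr 1
    ring
  have hpow_pos : (0:ℝ) < (lam / r) ^ ((n : ℝ) - α) :=
    Real.rpow_pos_of_pos (by positivity) _
  calc C₀ * (2 * ‖x‖) ^ (-((n : ℝ) - α) / 2)
      = (lam / r) ^ ((n : ℝ) - α) * C₀ := by rw [hpow]; ring
    _ ≤ (lam / r) ^ ((n : ℝ) - α) * u ((lam ^ 2 / ‖x‖ ^ 2) • x) := by
        exact mul_le_mul_of_nonneg_left hCy hpow_pos.le
    _ ≤ u x := key
end

section
/- Let n ≥ 3, p > 1, and let Ω ⊂ ℝⁿ be a bounded open set. Suppose u ∈ C²(Ω) ∩ C(Ω̄) is positive in Ω, vanishes on ∂Ω, and satisfies -Δu = u^p in Ω. Then max_{Ω̄} u ≥ (2n / (diam Ω)²)^{1/(p-1)}, i.e., ‖u‖_∞ ≥ (√(2n)/diam Ω)^{2/(p-1)}. -/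
open Metric Set
open scoped RealInnerProductSpace

/-- The Laplacian as a sum of second partial derivatives along the standard
coordinate directions of Euclidean space. -/
noncomputable def lap {n : ℕ} (f : EuclideanSpace ℝ (Fin n) → ℝ)
    (x : EuclideanSpace ℝ (Fin n)) : ℝ :=
  ∑ i : Fin n, fderiv ℝ (fun y => fderiv ℝ f y (EuclideanSpace.single i 1)) x
    (EuclideanSpace.single i 1)


/-- Second derivative test (necessary condition) at a local max. -/
lemma secondDeriv_nonpos_of_isLocalMax {g : ℝ → ℝ} {δ a : ℝ} (hδ : 0 < δ)
    (hdiff : ∀ t ∈ Metric.ball (0:ℝ) δ, DifferentiableAt ℝ g t)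
    (hmax : IsLocalMax g 0) (hh : HasDerivAt (deriv g) a 0) : a ≤ 0 := by
  by_contra hpos
  push_neg at hpos
  have hg0 : deriv g 0 = 0 := hmax.deriv_eq_zero
  have hslope : Filter.Tendsto (slope (deriv g) 0) (nhdsWithin 0 {(0:ℝ)}ᶜ) (nhds a) :=
    hasDerivAt_iff_tendsto_slope.1 hh
  have hev : ∀ᶠ t in nhdsWithin (0:ℝ) (Set.Ioi 0), 0 < deriv g t := by
    have h1 : ∀ᶠ t in nhdsWithin (0:ℝ) {(0:ℝ)}ᶜ, 0 < slope (deriv g) 0 t :=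
      hslope.eventually (eventually_gt_nhds hpos)
    have h2 : nhdsWithin (0:ℝ) (Set.Ioi 0) ≤ nhdsWithin (0:ℝ) {(0:ℝ)}ᶜ :=
      nhdsWithin_mono _ (fun t ht => ne_of_gt ht)
    filter_upwards [h2 h1, self_mem_nhdsWithin] with t ht ht'
    have ht0 : (0:ℝ) < t := ht'
    have hs : slope (deriv g) 0 t = deriv g t / t := by
      simp [slope_def_field, hg0]
    rw [hs] at ht
    have := mul_pos ht ht0
    rwa [div_mul_cancel₀ _ (ne_of_gt ht0)] at this
  obtain ⟨η, hη, hηP⟩ := Metric.mem_nhdsWithin_iff.1 hev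
  obtain ⟨δ', hδ', hmaxball⟩ := Metric.eventually_nhds_iff.1 hmax
  set m : ℝ := min (min η δ) δ' with hmdef
  have hm0 : 0 < m := lt_min (lt_min hη hδ) hδ'
  set t : ℝ := m / 2 with htdef
  have ht0 : 0 < t := by positivity
  have htm : t < m := half_lt_self hm0
  have htη : t < η := htm.trans_le ((min_le_left _ _).trans (min_le_left _ _))
  have htδ : t < δ := htm.trans_le ((min_le_left _ _).trans (min_le_right _ _))
  have htδ' : t < δ' := htm.trans_le (min_le_right _ _)
  -- MVT on [0, t]
  have hder : ∀ s ∈ Set.Ioo (0:ℝ) t, 0 < deriv g s := by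
    intro s hs
    apply hηP
    constructor
    · simp only [Metric.mem_ball, Real.dist_eq, sub_zero]
      rw [abs_of_pos hs.1]
      exact hs.2.trans htη
    · exact hs.1
  have hcont : ContinuousOn g (Set.Icc 0 t) := by
    intro s hs
    apply ((hdiff s ?_).continuousAt).continuousWithinAt
    simp only [Metric.mem_ball, Real.dist_eq, sub_zero]
    rw [abs_of_nonneg hs.1]
    exact lt_of_le_of_lt hs.2 htδ
  have hdiff' : DifferentiableOn ℝ g (Set.Ioo (0:ℝ) t) := by
    intro s hs
    apply DifferentiableAt.differentiableWithinAt; apply hdiff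
    simp only [Metric.mem_ball, Real.dist_eq, sub_zero]
    rw [abs_of_pos hs.1]
    exact hs.2.trans htδ
  obtain ⟨ξ, hξ, hξeq⟩ := exists_deriv_eq_slope g ht0 hcont hdiff'
  have hgt : g t ≤ g 0 := by
    apply hmaxball
    simp only [Real.dist_eq, sub_zero]
    rw [abs_of_pos ht0]
    exact htδ'
  have : deriv g ξ ≤ 0 := by
    rw [hξeq]
    apply div_nonpos_of_nonpos_of_nonneg <;> simp <;> linarith
  linarith [hder ξ hξ]

section
variable {n : ℕ}
local notation "E" => EuclideanSpace ℝ (Fin n)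

lemma key_interior {Ω : Set (EuclideanSpace ℝ (Fin n))} (hΩo : IsOpen Ω)
    {u : EuclideanSpace ℝ (Fin n) → ℝ} (hu2 : ContDiffOn ℝ 2 u Ω)
    (c : ℝ) (x₀ : EuclideanSpace ℝ (Fin n))
    {y : EuclideanSpace ℝ (Fin n)} (hy : y ∈ Ω)
    (hmax : ∀ z ∈ Ω, u z + c * ⟪z - x₀, z - x₀⟫ ≤ u y + c * ⟪y - x₀, y - x₀⟫) :
    lap u y + c * (2 * n) ≤ 0 := by
  set q : E → ℝ := fun z => ⟪z - x₀, z - x₀⟫ with hqdef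
  set v : E → ℝ := fun z => u z + c * q z with hvdef
  -- differentiability of u on Ω
  have hudiff : DifferentiableOn ℝ u Ω := hu2.differentiableOn (by norm_num)
  have hqd : ∀ z : E, HasFDerivAt q ((fderivInnerCLM ℝ (z - x₀, z - x₀)).comp
      ((ContinuousLinearMap.id ℝ E).prod (ContinuousLinearMap.id ℝ E))) z :=
    fun z => ((hasFDerivAt_id z).sub_const x₀).inner ℝ ((hasFDerivAt_id z).sub_const x₀)
  have hqapp : ∀ z e : E, ((fderivInnerCLM ℝ (z - x₀, z - x₀)).comp
      ((ContinuousLinearMap.id ℝ E).prod (ContinuousLinearMap.id ℝ E))) e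
      = 2 * ⟪z - x₀, e⟫ := by
    intro z e
    simp only [ContinuousLinearMap.comp_apply, ContinuousLinearMap.prod_apply,
      ContinuousLinearMap.id_apply, fderivInnerCLM_apply]
    rw [real_inner_comm e]
    ring
  have hvd : ∀ z ∈ Ω, DifferentiableAt ℝ v z := by
    intro z hz
    exact ((hudiff.differentiableAt (hΩo.mem_nhds hz))).add
      (((hqd z).differentiableAt).const_mul c)
  have hfv : ∀ z ∈ Ω, ∀ e : E, fderiv ℝ v z e = fderiv ℝ u z e + c * (2 * ⟪z - x₀, e⟫) := by
    intro z hz e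
    have h1 : DifferentiableAt ℝ u z := hudiff.differentiableAt (hΩo.mem_nhds hz)
    have h2 : DifferentiableAt ℝ q z := (hqd z).differentiableAt
    rw [hvdef]
    rw [fderiv_fun_add h1 (h2.const_mul c)]
    rw [fderiv_const_mul h2 c]
    rw [(hqd z).fderiv]
    simp only [ContinuousLinearMap.add_apply, ContinuousLinearMap.coe_smul',
      Pi.smul_apply, smul_eq_mul]
    rw [hqapp z e]
  -- C¹ regularity of fderiv u
  have hfd1 : ContDiffOn ℝ 1 (fun z => fderiv ℝ u z) Ω := by
    exact hu2.fderiv_of_isOpen hΩo (by norm_num)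
  -- per-direction inequality
  have key : ∀ i : Fin n,
      fderiv ℝ (fun z => fderiv ℝ u z (EuclideanSpace.single i 1)) y
        (EuclideanSpace.single i 1) + c * 2 ≤ 0 := by
    intro i
    set e : E := EuclideanSpace.single i 1 with hedef
    have hne : ‖e‖ = 1 := by simp [hedef, EuclideanSpace.norm_single]
    -- A is the directional derivative function of u
    set A : E → ℝ := fun z => fderiv ℝ u z e with hAdef
    have hAdiff : DifferentiableAt ℝ A y := by
      have h1 : DifferentiableAt ℝ (fun z => fderiv ℝ u z) y :=
        (hfd1.differentiableOn one_ne_zero).differentiableAt (hΩo.mem_nhds hy)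
      exact (ContinuousLinearMap.apply ℝ ℝ e).differentiableAt.comp y h1
    -- B : the rest
    set B : E → ℝ := fun z => c * (2 * ⟪z - x₀, e⟫) with hBdef
    have hBd : HasFDerivAt B ((2*c) • (innerSL ℝ e)) y := by
      have h1 : HasFDerivAt (fun z : E => ⟪e, z⟫) (innerSL ℝ e) y := (innerSL ℝ e).hasFDerivAt
      have h2 := (h1.const_mul (2*c)).sub_const ((2*c) * ⟪e, x₀⟫)
      have : (fun z : E => (2*c) * ⟪e, z⟫ - (2*c) * ⟪e, x₀⟫) = B := by
        funext z
        rw [hBdef]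
        simp only [inner_sub_left]
        rw [real_inner_comm z e, real_inner_comm x₀ e]
        ring
      rwa [this] at h2
    -- G the directional derivative of v
    have hGev : (fun z => fderiv ℝ v z e) =ᶠ[nhds y] (fun z => A z + B z) := by
      filter_upwards [hΩo.mem_nhds hy] with z hz
      exact hfv z hz e
    have hGd : HasFDerivAt (fun z => fderiv ℝ v z e)
        (fderiv ℝ A y + (2*c) • (innerSL ℝ e)) y := by
      have := (hAdiff.hasFDerivAt.add hBd)
      exact this.congr_of_eventuallyEq hGev
    -- the line
    obtain ⟨δ, hδ, hball⟩ := Metric.isOpen_iff.1 hΩo y hy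
    set L : ℝ → E := fun t => y + t • e with hLdef
    have hLmem : ∀ t : ℝ, |t| < δ → L t ∈ Ω := by
      intro t ht
      apply hball
      simp only [hLdef, Metric.mem_ball, dist_self_add_left, norm_smul, Real.norm_eq_abs, hne,
        mul_one]
      exact ht
    have hLd : ∀ t : ℝ, HasDerivAt L e t := by
      intro t
      simpa [hLdef] using ((hasDerivAt_id t).smul_const e).const_add y
    set g : ℝ → ℝ := fun t => v (L t) with hgdef
    have hgd : ∀ t ∈ Metric.ball (0:ℝ) δ, HasDerivAt g (fderiv ℝ v (L t) e) t := by
      intro t ht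
      simp only [Metric.mem_ball, Real.dist_eq, sub_zero] at ht
      exact ((hvd (L t) (hLmem t ht)).hasFDerivAt).comp_hasDerivAt t (hLd t)
    have hgdiff : ∀ t ∈ Metric.ball (0:ℝ) δ, DifferentiableAt ℝ g t :=
      fun t ht => (hgd t ht).differentiableAt
    have hderivg : deriv g =ᶠ[nhds 0] (fun t => fderiv ℝ v (L t) e) := by
      filter_upwards [Metric.ball_mem_nhds (0:ℝ) hδ] with t ht
      exact (hgd t ht).deriv
    have hh : HasDerivAt (fun t => fderiv ℝ v (L t) e)
        ((fderiv ℝ A y + (2*c) • (innerSL ℝ e)) e) 0 := by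
      have h0 : L 0 = y := by simp [hLdef]
      have hGd0 : HasFDerivAt (fun z => fderiv ℝ v z e)
          (fderiv ℝ A y + (2*c) • (innerSL ℝ e)) (L 0) := by rw [h0]; exact hGd
      exact hGd0.comp_hasDerivAt 0 (hLd 0)
    have hh2 : HasDerivAt (deriv g) ((fderiv ℝ A y + (2*c) • (innerSL ℝ e)) e) 0 :=
      hh.congr_of_eventuallyEq hderivg
    have hlm : IsLocalMax g 0 := by
      filter_upwards [Metric.ball_mem_nhds (0:ℝ) hδ] with t ht
      simp only [Metric.mem_ball, Real.dist_eq, sub_zero] at ht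
      have h0 : L 0 = y := by simp [hLdef]
      have := hmax (L t) (hLmem t ht)
      simp only [hgdef, hvdef, hqdef, h0]
      exact this
    have := secondDeriv_nonpos_of_isLocalMax hδ hgdiff hlm hh2
    have happ : (fderiv ℝ A y + (2*c) • (innerSL ℝ e)) e
        = fderiv ℝ A y e + c * 2 := by
      simp only [ContinuousLinearMap.add_apply, ContinuousLinearMap.coe_smul', Pi.smul_apply,
        smul_eq_mul, innerSL_apply_apply]
      have : ⟪e, e⟫ = 1 := by
        rw [real_inner_self_eq_norm_sq, hne]; norm_num
      rw [this]; ring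
    rw [happ] at this
    exact this
  -- sum over directions
  have hsum := Finset.sum_le_sum (fun i (_ : i ∈ Finset.univ) => key i)
  simp only [Finset.sum_add_distrib, Finset.sum_const, Finset.card_univ, Fintype.card_fin,
    nsmul_eq_mul, Finset.sum_const_zero] at hsum
  unfold lap
  linarith
end

theorem stmt_16 (n : ℕ) (hn : 3 ≤ n) (p : ℝ) (hp : 1 < p)
    (Ω : Set (EuclideanSpace ℝ (Fin n)))
    (hΩo : IsOpen Ω) (hΩb : Bornology.IsBounded Ω) (hΩne : Ω.Nonempty)
    (u : EuclideanSpace ℝ (Fin n) → ℝ)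
    (hu2 : ContDiffOn ℝ 2 u Ω) (huc : ContinuousOn u (closure Ω))
    (hupos : ∀ x ∈ Ω, 0 < u x) (hubd : ∀ x ∈ frontier Ω, u x = 0)
    (heq : ∀ x ∈ Ω, -lap u x = u x ^ p) :
    (Real.sqrt (2 * n) / Metric.diam Ω) ^ (2 / (p - 1)) ≤
      sSup (u '' closure Ω) := by
  have hn0 : 0 < (n:ℝ) := by
    have : 0 < n := by omega
    exact_mod_cast this
  set K := closure Ω with hKdef
  have hK : IsCompact K := isCompact_of_isClosed_isBounded isClosed_closure hΩb.closure
  have hKne : K.Nonempty := hΩne.closure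
  have hΩsub : Ω ⊆ K := subset_closure
  -- max of u
  obtain ⟨x₀, hx₀K, hx₀max⟩ := hK.exists_isMaxOn hKne huc
  set M := u x₀ with hMdef
  have hsup : sSup (u '' K) = M := by
    apply IsGreatest.csSup_eq
    exact ⟨mem_image_of_mem u hx₀K, fun m hm => by
      obtain ⟨z, hz, rfl⟩ := hm; exact hx₀max hz⟩
  have hfrontier : frontier Ω = K \ Ω := by
    rw [hKdef, frontier, hΩo.interior_eq]
  have hx₀Ω : x₀ ∈ Ω := by
    by_contra h
    obtain ⟨z, hz⟩ := hΩne
    have h1 : u x₀ = 0 := hubd x₀ (by rw [hfrontier]; exact ⟨hx₀K, h⟩)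
    have h2 : u z ≤ u x₀ := hx₀max (hΩsub hz)
    have h3 := hupos z hz
    rw [h1] at h2
    linarith
  have hM0 : 0 < M := hupos x₀ hx₀Ω
  set d := Metric.diam Ω with hddef
  have hd0 : 0 < d := by
    obtain ⟨r, hr, hball⟩ := Metric.isOpen_iff.1 hΩo x₀ hx₀Ω
    have : Nonempty (Fin n) := ⟨⟨0, by omega⟩⟩
    set w : EuclideanSpace ℝ (Fin n) := x₀ + (r/2) • EuclideanSpace.single ⟨0, by omega⟩ 1 with hw
    have hdist : dist w x₀ = r / 2 := by
      rw [hw, dist_self_add_left, norm_smul, Real.norm_eq_abs, abs_of_pos (half_pos hr),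
        EuclideanSpace.norm_single, norm_one, mul_one]
    have hwΩ : w ∈ Ω := by
      apply hball
      rw [Metric.mem_ball, hdist]
      linarith
    have := Metric.dist_le_diam_of_mem hΩb hwΩ hx₀Ω
    rw [hdist] at this
    linarith
  -- main estimate : M ≤ M^p * d^2 / (2n) via epsilon argument
  have hmain : ∀ ε > 0, M * (2*n) ≤ (M ^ p + ε) * d^2 := by
    intro ε hε
    set c := (M ^ p + ε) / (2*n) with hcdef
    have hMp : 0 < M ^ p := Real.rpow_pos_of_pos hM0 p
    have hc : 0 < c := by positivity
    set v : EuclideanSpace ℝ (Fin n) → ℝ := fun z => u z + c * ⟪z - x₀, z - x₀⟫ with hvdef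
    have hvc : ContinuousOn v K := by
      apply huc.add
      apply Continuous.continuousOn
      have hcont : Continuous fun z : EuclideanSpace ℝ (Fin n) => ⟪z - x₀, z - x₀⟫ :=
        Continuous.inner (continuous_id.sub continuous_const)
          (continuous_id.sub continuous_const)
      exact continuous_const.mul hcont
    obtain ⟨y, hyK, hymax⟩ := hK.exists_isMaxOn hKne hvc
    have hyΩ : y ∉ Ω := by
      intro hyΩ
      have hkey := key_interior hΩo hu2 c x₀ hyΩ (fun z hz => hymax (hΩsub hz))
      have h1 : -lap u y = u y ^ p := heq y hyΩ
      have h2 : u y ^ p ≤ M ^ p :=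
        Real.rpow_le_rpow (le_of_lt (hupos y hyΩ)) (hx₀max (hΩsub hyΩ)) (by linarith)
      have h3 : c * (2*n) = M ^ p + ε := by
        rw [hcdef, div_mul_cancel₀]; positivity
      nlinarith
    have hyfr : y ∈ frontier Ω := by rw [hfrontier]; exact ⟨hyK, hyΩ⟩
    have huy : u y = 0 := hubd y hyfr
    have hvy : v y ≤ c * d^2 := by
      have hdist : dist y x₀ ≤ d := by
        rw [hddef, ← Metric.diam_closure]
        exact Metric.dist_le_diam_of_mem hΩb.closure hyK hx₀K
      have hinner : ⟪y - x₀, y - x₀⟫ = ‖y - x₀‖^2 := real_inner_self_eq_norm_sq _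
      have hnorm : ‖y - x₀‖ = dist y x₀ := (dist_eq_norm _ _).symm
      rw [hvdef]
      simp only [huy, zero_add, hinner, hnorm]
      have : dist y x₀ ^ 2 ≤ d ^ 2 := by
        apply sq_le_sq' <;> [linarith [dist_nonneg (x := y) (y := x₀)]; exact hdist]
      nlinarith
    have hvx₀ : v x₀ = M := by simp [hvdef, hMdef]
    have hMle : M ≤ c * d^2 := by
      rw [← hvx₀]
      exact le_trans (hymax hx₀K) hvy
    rw [hcdef] at hMle
    rw [div_mul_eq_mul_div] at hMle
    rw [le_div_iff₀ (by positivity)] at hMle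
    linarith
  have hmain2 : M * (2*n) ≤ M ^ p * d^2 := by
    by_contra h
    push_neg at h
    have hd2 : (0:ℝ) < d^2 := by positivity
    set ε := (M * (2*n) - M ^ p * d^2) / (2*d^2) with hεdef
    have hε : 0 < ε := div_pos (by linarith) (by positivity)
    have h1 := hmain ε hε
    have h2 : ε * d^2 = (M * (2*n) - M ^ p * d^2) / 2 := by
      rw [hεdef]; field_simp
    nlinarith
  -- conclude 2n / d^2 ≤ M^(p-1)
  have hstep : 2*(n:ℝ) / d^2 ≤ M ^ (p-1) := by
    have hMsplit : M ^ p = M ^ (p-1) * M := by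
      rw [← Real.rpow_add_one (ne_of_gt hM0)]
      ring_nf
    rw [hMsplit] at hmain2
    rw [div_le_iff₀ (by positivity)]
    nlinarith [hmain2, hM0]
  -- final rpow manipulation
  rw [hsup]
  have hs : (0:ℝ) ≤ Real.sqrt (2*n) / d := by positivity
  have hsq : (Real.sqrt (2*n) / d) ^ (2:ℝ) = 2*(n:ℝ) / d^2 := by
    rw [Real.rpow_two, div_pow, Real.sq_sqrt (by positivity)]
  have hexp : (2:ℝ) / (p-1) = 2 * (1/(p-1)) := by ring
  rw [hexp, Real.rpow_mul hs, hsq]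
  calc (2*(n:ℝ)/d^2) ^ (1/(p-1))
      ≤ (M ^ (p-1)) ^ (1/(p-1)) := by
        apply Real.rpow_le_rpow (by positivity) hstep
          (one_div_nonneg.2 (by linarith))
    _ = M := by
        rw [← Real.rpow_mul (le_of_lt hM0), one_div,
          mul_inv_cancel₀ (by linarith : p - 1 ≠ 0), Real.rpow_one]
end

section
/- Let n > α > 0, λ > 0, a > -α, and p > 0 with τ := n + α + 2a - p(n-α) ≠ 0. Suppose u : ℝⁿ \ {0} → (0,∞) satisfies u(x) = C ∫_{ℝⁿ} |y|^a u(y)^p |x-y|^{α-n} dy for all x ≠ 0 (C > 0, all integrals finite), and let u_λ(x) = (λ/|x|)^{n-α} u(λ²x/|x|²). Then u_λ satisfies u_λ(x) = C ∫_{ℝⁿ} (λ/|y|)^τ |y|^a u_λ(y)^p |x-y|^{α-n} dy for all x ≠ 0. -/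
open MeasureTheory

open Real Module EuclideanGeometry in
private lemma stmt19_key_alg (nn : ℕ) (L X Z U W d a p τ : ℝ)
    (hL : 0 < L) (hX : 0 < X) (hZ : 0 < Z) (hU : 0 < U) (hW : 0 ≤ W) (hd : 0 < d)
    (hτ : τ = 2 * (nn : ℝ) - d + 2 * a - p * d) :
    (L / Z) ^ τ * Z ^ a * ((L / Z) ^ d * U) ^ p / W ^ d
      = (L / X) ^ d *
        (((L / Z) ^ 2) ^ nn *
          ((L ^ 2 / Z) ^ a * U ^ p / (L ^ 2 / (X * Z) * W) ^ d)) := by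
  rcases hW.eq_or_lt with h0 | hWpos
  · rw [← h0]
    simp [Real.zero_rpow hd.ne', div_zero, mul_zero]
  · have h1 : 0 < (L / Z) ^ τ * Z ^ a * ((L / Z) ^ d * U) ^ p / W ^ d := by positivity
    have h2 : 0 < (L / X) ^ d *
        (((L / Z) ^ 2) ^ nn *
          ((L ^ 2 / Z) ^ a * U ^ p / (L ^ 2 / (X * Z) * W) ^ d)) := by positivity
    rw [← Real.exp_log h1, ← Real.exp_log h2]
    congr 1
    simp (disch := positivity) only [Real.log_div, Real.log_mul, Real.log_rpow, Real.log_pow]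
    rw [hτ]
    push_cast
    ring

open Module EuclideanGeometry in
private lemma stmt19_det_calc {n : ℕ} (lam : ℝ) (z : EuclideanSpace ℝ (Fin n)) (hz : z ≠ 0) :
    |(((lam / dist z 0) ^ 2 •
        ((ℝ ∙ (z - 0))ᗮ.reflection : EuclideanSpace ℝ (Fin n) →L[ℝ] EuclideanSpace ℝ (Fin n))) :
        EuclideanSpace ℝ (Fin n) →L[ℝ] EuclideanSpace ℝ (Fin n)).det|
      = ((lam / ‖z‖) ^ 2) ^ n := by
  have h1 : (((lam / dist z 0) ^ 2 •
        ((ℝ ∙ (z - 0))ᗮ.reflection : EuclideanSpace ℝ (Fin n) →L[ℝ] EuclideanSpace ℝ (Fin n))) :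
        EuclideanSpace ℝ (Fin n) →L[ℝ] EuclideanSpace ℝ (Fin n)).det
      = ((lam / dist z 0) ^ 2) ^ (finrank ℝ (EuclideanSpace ℝ (Fin n))) *
        LinearMap.det ((ℝ ∙ (z - 0))ᗮ.reflection).toLinearMap := by
    rw [ContinuousLinearMap.det, ContinuousLinearMap.coe_smul, LinearMap.det_smul]
    rfl
  rw [h1, Submodule.det_reflection, Submodule.orthogonal_orthogonal, sub_zero,
    finrank_span_singleton hz, pow_one, finrank_euclideanSpace_fin, mul_neg_one, abs_neg,
    abs_pow, abs_pow, sq_abs, dist_zero_right]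

theorem stmt_19 (n : ℕ) (α lam a p C τ : ℝ) (hα : 0 < α) (hαn : α < n)
    (hlam : 0 < lam) (ha : -α < a) (hp : 0 < p) (hC : 0 < C)
    (hτ : τ = (n : ℝ) + α + 2 * a - p * ((n : ℝ) - α)) (hτ0 : τ ≠ 0)
    (u : EuclideanSpace ℝ (Fin n) → ℝ)
    (hpos : ∀ x : EuclideanSpace ℝ (Fin n), x ≠ 0 → 0 < u x)
    (hint : ∀ x : EuclideanSpace ℝ (Fin n), x ≠ 0 →
      Integrable (fun y : EuclideanSpace ℝ (Fin n) =>
        ‖y‖ ^ a * u y ^ p / ‖x - y‖ ^ ((n : ℝ) - α)))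
    (hIE : ∀ x : EuclideanSpace ℝ (Fin n), x ≠ 0 →
      u x = C * ∫ y : EuclideanSpace ℝ (Fin n),
        ‖y‖ ^ a * u y ^ p / ‖x - y‖ ^ ((n : ℝ) - α))
    (ulam : EuclideanSpace ℝ (Fin n) → ℝ)
    (hulam : ∀ x : EuclideanSpace ℝ (Fin n),
      ulam x = (lam / ‖x‖) ^ ((n : ℝ) - α) * u ((lam ^ 2 / ‖x‖ ^ 2) • x)) :
    ∀ x : EuclideanSpace ℝ (Fin n), x ≠ 0 →
      ulam x = C * ∫ y : EuclideanSpace ℝ (Fin n),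
        (lam / ‖y‖) ^ τ * ‖y‖ ^ a * ulam y ^ p / ‖x - y‖ ^ ((n : ℝ) - α) := by
  classical
  have hlam0 : lam ≠ 0 := hlam.ne'
  have hd : (0:ℝ) < (n:ℝ) - α := sub_pos.2 hαn
  have hn : 0 < n := by
    by_contra h
    push_neg at h
    interval_cases n
    · exact absurd (hα.trans hαn) (by norm_num)
  haveI : Nontrivial (EuclideanSpace ℝ (Fin n)) := Module.nontrivial_of_finrank_pos (R := ℝ)
    (by simpa using hn)
  set φ : EuclideanSpace ℝ (Fin n) → EuclideanSpace ℝ (Fin n) :=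
    EuclideanGeometry.inversion (0 : EuclideanSpace ℝ (Fin n)) lam with hφdef
  have hφ : ∀ z : EuclideanSpace ℝ (Fin n), (lam ^ 2 / ‖z‖ ^ 2) • z = φ z := by
    intro z
    simp [hφdef, EuclideanGeometry.inversion, dist_zero_right, vsub_eq_sub, sub_zero,
      vadd_eq_add, add_zero, div_pow]
  have hφne : ∀ z : EuclideanSpace ℝ (Fin n), z ≠ 0 → φ z ≠ 0 := fun z hz h =>
    hz ((EuclideanGeometry.inversion_eq_center hlam0).mp h)
  have hinv : ∀ z : EuclideanSpace ℝ (Fin n), φ (φ z) = z :=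
    EuclideanGeometry.inversion_inversion 0 hlam0
  set s : Set (EuclideanSpace ℝ (Fin n)) := {0}ᶜ with hsdef
  have hs : MeasurableSet s := (measurableSet_singleton (0 : EuclideanSpace ℝ (Fin n))).compl
  have himg : φ '' s = s := by
    ext y
    simp only [hsdef, Set.mem_image, Set.mem_compl_iff, Set.mem_singleton_iff]
    constructor
    · rintro ⟨z, hz, rfl⟩
      exact hφne z hz
    · intro hy
      exact ⟨φ y, hφne y hy, hinv y⟩
  have hae : s =ᵐ[volume] (Set.univ : Set (EuclideanSpace ℝ (Fin n))) := by
    rw [Filter.eventuallyEq_univ, mem_ae_iff]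
    simpa [hsdef] using measure_singleton (0 : EuclideanSpace ℝ (Fin n))
  intro x hx
  have hxn : (0:ℝ) < ‖x‖ := norm_pos_iff.mpr hx
  set g : EuclideanSpace ℝ (Fin n) → ℝ :=
    fun y => ‖y‖ ^ a * u y ^ p / ‖φ x - y‖ ^ ((n : ℝ) - α) with hgdef
  set f' : EuclideanSpace ℝ (Fin n) → (EuclideanSpace ℝ (Fin n) →L[ℝ] EuclideanSpace ℝ (Fin n)) :=
    fun z => (lam / dist z 0) ^ 2 •
      ((ℝ ∙ (z - 0))ᗮ.reflection : EuclideanSpace ℝ (Fin n) →L[ℝ] EuclideanSpace ℝ (Fin n))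
    with hf'def
  have hCoV : ∫ y in φ '' s, g y = ∫ z in s, |(f' z).det| • g (φ z) := by
    refine integral_image_eq_integral_abs_det_fderiv_smul volume hs (fun z hz => ?_)
      ((EuclideanGeometry.inversion_injective (0 : EuclideanSpace ℝ (Fin n)) hlam0).injOn) g
    exact (EuclideanGeometry.hasFDerivAt_inversion
      (by simpa [hsdef] using hz : z ≠ (0 : EuclideanSpace ℝ (Fin n)))).hasFDerivWithinAt
  have hpt : ∀ z ∈ s, (lam / ‖z‖) ^ τ * ‖z‖ ^ a * ulam z ^ p / ‖x - z‖ ^ ((n : ℝ) - α)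
      = (lam / ‖x‖) ^ ((n : ℝ) - α) * (|(f' z).det| • g (φ z)) := by
    intro z hz
    have hz0 : z ≠ 0 := by simpa [hsdef] using hz
    have hzn : (0:ℝ) < ‖z‖ := norm_pos_iff.mpr hz0
    have hU : 0 < u (φ z) := hpos _ (hφne z hz0)
    have hnφz : ‖φ z‖ = lam ^ 2 / ‖z‖ := by
      have := EuclideanGeometry.dist_inversion_center (0 : EuclideanSpace ℝ (Fin n)) z lam
      simpa [hφdef, dist_zero_right] using this
    have hnφxz : ‖φ x - φ z‖ = lam ^ 2 / (‖x‖ * ‖z‖) * ‖x - z‖ := by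
      have := EuclideanGeometry.dist_inversion_inversion hx hz0 lam
      simpa [hφdef, dist_eq_norm, dist_zero_right, sub_zero] using this
    have hulz : ulam z = (lam / ‖z‖) ^ ((n : ℝ) - α) * u (φ z) := by
      rw [hulam z, hφ z]
    have hdet : |(f' z).det| = ((lam / ‖z‖) ^ 2) ^ n := stmt19_det_calc lam z hz0
    rw [hulz, hdet, smul_eq_mul, hgdef]
    simp only [hnφz, hnφxz]
    exact stmt19_key_alg n lam ‖x‖ ‖z‖ (u (φ z)) ‖x - z‖ ((n:ℝ) - α) a p τ hlam hxn hzn hU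
      (norm_nonneg _) hd (by rw [hτ]; ring)
  have hInt : (∫ y : EuclideanSpace ℝ (Fin n),
        (lam / ‖y‖) ^ τ * ‖y‖ ^ a * ulam y ^ p / ‖x - y‖ ^ ((n : ℝ) - α))
      = (lam / ‖x‖) ^ ((n : ℝ) - α) * ∫ y : EuclideanSpace ℝ (Fin n), g y := by
    calc (∫ y : EuclideanSpace ℝ (Fin n),
          (lam / ‖y‖) ^ τ * ‖y‖ ^ a * ulam y ^ p / ‖x - y‖ ^ ((n : ℝ) - α))
        = ∫ y in s, (lam / ‖y‖) ^ τ * ‖y‖ ^ a * ulam y ^ p / ‖x - y‖ ^ ((n : ℝ) - α) := by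
          rw [setIntegral_congr_set hae, setIntegral_univ]
      _ = ∫ z in s, (lam / ‖x‖) ^ ((n : ℝ) - α) * (|(f' z).det| • g (φ z)) :=
          setIntegral_congr_fun hs hpt
      _ = (lam / ‖x‖) ^ ((n : ℝ) - α) * ∫ z in s, |(f' z).det| • g (φ z) :=
          integral_const_mul _ _
      _ = (lam / ‖x‖) ^ ((n : ℝ) - α) * ∫ y in φ '' s, g y := by rw [hCoV]
      _ = (lam / ‖x‖) ^ ((n : ℝ) - α) * ∫ y in s, g y := by rw [himg]
      _ = (lam / ‖x‖) ^ ((n : ℝ) - α) * ∫ y : EuclideanSpace ℝ (Fin n), g y := by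
          rw [setIntegral_congr_set hae, setIntegral_univ]
  rw [hInt, hulam x, hφ x, hIE (φ x) (hφne x hx)]
  rw [hgdef]
  ring
end
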